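/- Let A = ⊛_ℕ B be the infinite minimal Fermi C*-tensor product of a unital Z₂-graded C*-algebra (B, α), with the natural action of the group ℙ of finite permutations of ℕ. Then every ℙ-invariant (symmetric) state ω on A is even: ω ∘ θ = ω, where θ = ⊛_ℕ α is the induced grading on A. -/

import Mathlib

open scoped ComplexOrder

/-- A state on a unital complex *-algebra, written as a plain function. -/
def IsStateOn {R : Type*} [Ring R] [Algebra ℂ R] [StarRing R] (f : R → ℂ) : Prop :=
  (∀ x y, f (x + y) = f x + f y) ∧ (∀ (c : ℂ) (x), f (c • x) = c * f x) ∧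
    f 1 = 1 ∧ ∀ x, 0 ≤ f (star x * x)

/-- The group of finitary permutations of `ℕ` (those moving only finitely many points). -/
def finitaryPerms : Subgroup (Equiv.Perm ℕ) where
  carrier := {g | {k | g k ≠ k}.Finite}
  one_mem' := by
    show Set.Finite {k : ℕ | (1 : Equiv.Perm ℕ) k ≠ k}
    have h : {k : ℕ | (1 : Equiv.Perm ℕ) k ≠ k} = (∅ : Set ℕ) := by ext k; simp
    rw [h]; exact Set.finite_empty
  mul_mem' := by
    intro g h hg hh
    show Set.Finite {k : ℕ | (g * h) k ≠ k}
    refine Set.Finite.subset (Set.Finite.union hh (hg.preimage h.injective.injOn)) ?_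
    intro k hk
    simp only [Set.mem_setOf_eq, Equiv.Perm.mul_apply] at hk
    by_cases hhk : h k = k
    · right
      simp only [Set.mem_preimage, Set.mem_setOf_eq, hhk]
      rwa [hhk] at hk
    · left; exact hhk
  inv_mem' := by
    intro g hg
    show Set.Finite {k : ℕ | g⁻¹ k ≠ k}
    refine Set.Finite.subset (hg.image g) ?_
    intro k hk
    simp only [Set.mem_setOf_eq] at hk
    exact ⟨g⁻¹ k, by simp only [Set.mem_setOf_eq, show g (g⁻¹ k) = k from Equiv.apply_symm_apply g k]; exact Ne.symm hk,
      Equiv.apply_symm_apply g k⟩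

open scoped Pointwise

set_option linter.unusedSectionVars false

namespace DF11
variable {R : Type*} [Ring R] [Algebra ℂ R] [StarRing R] [StarModule ℂ R] {Ω : R → ℂ}

theorem o_zero (hΩ : IsStateOn Ω) : Ω 0 = 0 := by
  have := hΩ.2.1 0 0; simpa using this

theorem o_neg (hΩ : IsStateOn Ω) (x : R) : Ω (-x) = -Ω x := by
  have := hΩ.2.1 (-1) x; simpa using this

theorem o_sub (hΩ : IsStateOn Ω) (x y : R) : Ω (x - y) = Ω x - Ω y := by
  rw [sub_eq_add_neg, hΩ.1, o_neg hΩ, sub_eq_add_neg]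

theorem o_sum (hΩ : IsStateOn Ω) {n : ℕ} (f : ℕ → R) :
    Ω (∑ k ∈ Finset.range n, f k) = ∑ k ∈ Finset.range n, Ω (f k) := by
  induction n with
  | zero => simpa using o_zero hΩ
  | succ n ih => rw [Finset.sum_range_succ, Finset.sum_range_succ, hΩ.1, ih]

theorem o_expand (hΩ : IsStateOn Ω) (x : R) (t : ℂ) :
    Ω (star (x + t • 1) * (x + t • 1)) =
      Ω (star x * x) + t * Ω (star x) + (starRingEnd ℂ) t * Ω x + Complex.normSq t := by
  have e : star (x + t • 1) * (x + t • 1) =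
      star x * x + t • star x + ((starRingEnd ℂ) t) • x + (t * (starRingEnd ℂ) t) • (1 : R) := by
    simp only [star_add, star_smul, star_one, Complex.star_def, smul_add, add_mul, mul_add,
      mul_smul_comm, smul_mul_assoc, mul_one, one_mul, smul_smul]
    abel
  rw [e, hΩ.1, hΩ.1, hΩ.1, hΩ.2.1, hΩ.2.1, hΩ.2.1, hΩ.2.2.1]
  have : (t * (starRingEnd ℂ) t) * 1 = (Complex.normSq t : ℂ) := by
    rw [mul_one, Complex.mul_conj]
  rw [this]

theorem o_star (hΩ : IsStateOn Ω) (x : R) : Ω (star x) = (starRingEnd ℂ) (Ω x) := by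
  have him : ∀ t : ℂ,
      (Ω (star x * x) + t * Ω (star x) + (starRingEnd ℂ) t * Ω x + Complex.normSq t).im = 0 := by
    intro t
    have h := hΩ.2.2.2 (x + t • 1)
    rw [o_expand hΩ x t] at h
    exact ((Complex.le_def.mp h).2).symm
  have hS : (Ω (star x * x)).im = 0 := ((Complex.le_def.mp (hΩ.2.2.2 x)).2).symm
  have h1 := him 1
  have hI := him Complex.I
  simp only [Complex.add_im, Complex.mul_im, Complex.one_re, Complex.one_im, Complex.I_re,
    Complex.I_im, Complex.conj_re, Complex.conj_im, Complex.ofReal_im, map_one,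
    Complex.normSq_one, map_neg, Complex.neg_im, Complex.neg_re, Complex.conj_I] at h1 hI
  apply Complex.ext <;>
    simp only [Complex.conj_re, Complex.conj_im] <;> linarith [h1, hI, hS]

theorem o_cs (hΩ : IsStateOn Ω) (x : R) : Complex.normSq (Ω x) ≤ (Ω (star x * x)).re := by
  have h := hΩ.2.2.2 (x + (-(Ω x)) • 1)
  rw [o_expand hΩ x (-(Ω x)), o_star hΩ x] at h
  have : Ω (star x * x) + -Ω x * (starRingEnd ℂ) (Ω x) + (starRingEnd ℂ) (-Ω x) * Ω x +
      (Complex.normSq (-(Ω x)) : ℂ) = Ω (star x * x) - Complex.normSq (Ω x) := by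
    rw [map_neg, Complex.normSq_neg]
    rw [neg_mul, neg_mul, Complex.mul_conj, mul_comm, Complex.mul_conj]
    ring
  rw [this] at h
  have := (Complex.le_def.mp h).1
  simp only [Complex.zero_re, Complex.sub_re, Complex.ofReal_re] at this
  linarith

end DF11

namespace DF11
variable {A : Type*} [CStarAlgebra A] {Ω : A → ℂ}

theorem o_bound (hΩ : IsStateOn Ω) (x : A) : ‖Ω x‖ ≤ ‖x‖ := by
  obtain ⟨s, hs, hsq⟩ : ∃ s : A, star s = s ∧
      algebraMap ℝ A ‖star x * x‖ - star x * x = s * s := by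
    letI := CStarAlgebra.spectralOrder A
    letI := CStarAlgebra.spectralOrderedRing (A := A)
    have h1 : star x * x ≤ algebraMap ℝ A ‖star x * x‖ :=
      IsSelfAdjoint.le_algebraMap_norm_self (IsSelfAdjoint.star_mul_self x)
    have h2 : (0 : A) ≤ algebraMap ℝ A ‖star x * x‖ - star x * x := sub_nonneg.mpr h1
    exact ⟨CFC.sqrt _, (IsSelfAdjoint.of_nonneg (CFC.sqrt_nonneg _)).star_eq,
      (CFC.sqrt_mul_sqrt_self _ h2).symm⟩
  have hΩalg : Ω (algebraMap ℝ A ‖star x * x‖) = (‖star x * x‖ : ℂ) := by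
    rw [IsScalarTower.algebraMap_apply ℝ ℂ A, Algebra.algebraMap_eq_smul_one, hΩ.2.1,
      hΩ.2.2.1, mul_one]
    norm_num
  have hpos : 0 ≤ Ω (s * s) := by
    have := hΩ.2.2.2 s; rwa [hs] at this
  have key : (Ω (star x * x)).re ≤ ‖star x * x‖ := by
    have : Ω (star x * x) = (‖star x * x‖ : ℂ) - Ω (s * s) := by
      rw [← hΩalg, ← o_sub hΩ]
      congr 1
      rw [← hsq]; abel
    rw [this]
    have h0 : 0 ≤ (Ω (s * s)).re := (Complex.le_def.mp hpos).1
    simp only [Complex.sub_re, Complex.ofReal_re]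
    linarith
  have hcs := o_cs hΩ x
  have hn : Complex.normSq (Ω x) ≤ ‖x‖ * ‖x‖ := by
    rw [← CStarRing.norm_star_mul_self (x := x)]
    linarith
  have habs : ‖Ω x‖ * ‖Ω x‖ = Complex.normSq (Ω x) := by
    rw [Complex.normSq_eq_norm_sq]; ring
  nlinarith [norm_nonneg (Ω x), norm_nonneg x]

theorem o_continuous (hΩ : IsStateOn Ω) : Continuous Ω := by
  refine (LipschitzWith.of_dist_le_mul (K := 1) fun x y => ?_).continuous
  rw [Complex.dist_eq, ← o_sub hΩ, dist_eq_norm]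
  simpa using o_bound hΩ (x - y)

end DF11

namespace DF11

variable {B A : Type} [CStarAlgebra B] [CStarAlgebra A]

/-- A tagged generator: site, element, parity flag (`true` = odd). -/
abbrev Tag (B : Type) := ℕ × B × Bool

def ok (β : B ≃⋆ₐ[ℂ] B) (p : Tag B) : Prop := β p.2.1 = cond p.2.2 (-p.2.1) p.2.1

def mono (ι : ℕ → B →⋆ₐ[ℂ] A) (L : List (Tag B)) : A := (L.map fun p => ι p.1 p.2.1).prod

def odds (L : List (Tag B)) : ℕ := L.countP (fun p => p.2.2)

theorem mono_nil (ι : ℕ → B →⋆ₐ[ℂ] A) : mono ι [] = 1 := rfl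

theorem mono_cons (ι : ℕ → B →⋆ₐ[ℂ] A) (p : Tag B) (L : List (Tag B)) :
    mono ι (p :: L) = ι p.1 p.2.1 * mono ι L := by simp [mono]

theorem mono_append (ι : ℕ → B →⋆ₐ[ℂ] A) (L L' : List (Tag B)) :
    mono ι (L ++ L') = mono ι L * mono ι L' := by simp [mono]

theorem odds_cons (p : Tag B) (L : List (Tag B)) :
    odds (p :: L) = odds L + (if p.2.2 then 1 else 0) := by simp [odds, List.countP_cons]

theorem odds_append (L L' : List (Tag B)) : odds (L ++ L') = odds L + odds L' := by
  simp [odds, List.countP_append]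

theorem theta_mono (β : B ≃⋆ₐ[ℂ] B) (ι : ℕ → B →⋆ₐ[ℂ] A) (θ : A ≃⋆ₐ[ℂ] A)
    (hθι : ∀ j b, θ (ι j b) = ι j (β b)) :
    ∀ L : List (Tag B), (∀ p ∈ L, ok β p) →
      θ (mono ι L) = ((-1 : ℂ) ^ odds L) • mono ι L := by
  intro L
  induction L with
  | nil => intro _; simp [mono_nil, odds]
  | cons p L ih =>
    intro hok
    obtain ⟨j, b, s⟩ := p
    have hb : β b = cond s (-b) b := hok _ (List.mem_cons_self)
    have hL := ih fun q hq => hok q (List.mem_cons_of_mem _ hq)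
    rw [mono_cons, map_mul, hθι, hL, odds_cons, hb]
    cases s with
    | false => simp [mul_smul_comm]
    | true => simp [pow_succ, mul_smul_comm, map_neg]

theorem star_mono (β : B ≃⋆ₐ[ℂ] B) (ι : ℕ → B →⋆ₐ[ℂ] A) :
    ∀ L : List (Tag B), (∀ p ∈ L, ok β p) →
      ∃ L' : List (Tag B), star (mono ι L) = mono ι L' ∧ odds L' = odds L ∧
        (∀ p ∈ L', ok β p) ∧ (∀ p ∈ L', ∃ q ∈ L, p.1 = q.1) := by
  intro L
  induction L with
  | nil => intro _; exact ⟨[], by simp [mono_nil], rfl, by simp, by simp⟩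
  | cons p L ih =>
    intro hok
    obtain ⟨j, b, s⟩ := p
    obtain ⟨L', hL', hodds, hok', hsites⟩ := ih fun q hq => hok q (List.mem_cons_of_mem _ hq)
    refine ⟨L' ++ [(j, star b, s)], ?_, ?_, ?_, ?_⟩
    · rw [mono_cons, star_mul, hL', mono_append, mono_cons, mono_nil, mul_one, map_star]
    · rw [odds_append, odds_cons (L := []), hodds, odds_cons]
      simp [odds]
    · intro q hq
      rcases List.mem_append.mp hq with h | h
      · exact hok' q h
      · have : q = (j, star b, s) := List.mem_singleton.mp h
        subst this
        have hb : β b = cond s (-b) b := hok _ (List.mem_cons_self)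
        show β (star b) = cond s (-(star b)) (star b)
        rw [map_star, hb]
        cases s <;> simp
    · intro q hq
      rcases List.mem_append.mp hq with h | h
      · obtain ⟨r, hr, hr'⟩ := hsites q h
        exact ⟨r, List.mem_cons_of_mem _ hr, hr'⟩
      · have : q = (j, star b, s) := List.mem_singleton.mp h
        subst this
        exact ⟨(j, b, s), List.mem_cons_self, rfl⟩

end DF11

namespace DF11

variable {B A : Type} [CStarAlgebra B] [CStarAlgebra A]

theorem comm_single (β : B ≃⋆ₐ[ℂ] B) (ι : ℕ → B →⋆ₐ[ℂ] A)
    (hcomm : ∀ i j, i ≠ j → ∀ b b', (β b = b ∨ β b' = b') → ι i b * ι j b' = ι j b' * ι i b)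
    (hanti : ∀ i j, i ≠ j → ∀ b b', β b = -b → β b' = -b' → ι i b * ι j b' = -(ι j b' * ι i b))
    (j : ℕ) (b : B) (s : Bool) (hb : ok β (j, b, s)) :
    ∀ L : List (Tag B), (∀ p ∈ L, ok β p) → (∀ p ∈ L, p.1 ≠ j) →
      ι j b * mono ι L = ((-1 : ℂ) ^ (cond s (odds L) 0)) • (mono ι L * ι j b) := by
  intro L
  induction L with
  | nil => intro _ _; cases s <;> simp [mono_nil, odds]
  | cons p L ih =>
    intro hok hne
    obtain ⟨i, c, t⟩ := p
    have hc : β c = cond t (-c) c := hok _ (List.mem_cons_self)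
    have hij : i ≠ j := hne _ (List.mem_cons_self)
    have hL := ih (fun q hq => hok q (List.mem_cons_of_mem _ hq))
      (fun q hq => hne q (List.mem_cons_of_mem _ hq))
    rw [mono_cons, ← mul_assoc]
    have hswap : ι j b * ι i c = (bif s && t then (-1 : ℂ) else 1) • (ι i c * ι j b) := by
      cases s with
      | false =>
        have hb' : β b = b := hb
        simpa using hcomm j i (Ne.symm hij) b c (Or.inl hb')
      | true =>
        cases t with
        | false =>
          have hc' : β c = c := hc
          simpa using hcomm j i (Ne.symm hij) b c (Or.inr hc')
        | true =>
          have hb' : β b = -b := hb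
          have hc' : β c = -c := hc
          simpa using hanti j i (Ne.symm hij) b c hb' hc'
    rw [hswap, smul_mul_assoc, mul_assoc, hL, mul_smul_comm, smul_smul, ← mul_assoc, odds_cons]
    congr 1
    cases s <;> cases t <;> simp [pow_add, pow_succ]
  -- done

theorem comm_mono (β : B ≃⋆ₐ[ℂ] B) (ι : ℕ → B →⋆ₐ[ℂ] A)
    (hcomm : ∀ i j, i ≠ j → ∀ b b', (β b = b ∨ β b' = b') → ι i b * ι j b' = ι j b' * ι i b)
    (hanti : ∀ i j, i ≠ j → ∀ b b', β b = -b → β b' = -b' → ι i b * ι j b' = -(ι j b' * ι i b)) :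
    ∀ L L' : List (Tag B), (∀ p ∈ L, ok β p) → (∀ p ∈ L', ok β p) →
      (∀ p ∈ L, ∀ q ∈ L', p.1 ≠ q.1) →
      mono ι L * mono ι L' = ((-1 : ℂ) ^ (odds L * odds L')) • (mono ι L' * mono ι L) := by
  intro L
  induction L with
  | nil => intro L' _ _ _; simp [mono_nil, odds]
  | cons p L ih =>
    intro L' hok hok' hdisj
    obtain ⟨j, b, s⟩ := p
    have hb : ok β (j, b, s) := hok _ (List.mem_cons_self)
    have h1 : ι j b * mono ι L' = ((-1 : ℂ) ^ (cond s (odds L') 0)) • (mono ι L' * ι j b) :=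
      comm_single β ι hcomm hanti j b s hb L' hok'
        (fun q hq => (hdisj _ (List.mem_cons_self) q hq).symm)
    have h2 := ih L' (fun q hq => hok q (List.mem_cons_of_mem _ hq)) hok'
      (fun q hq => hdisj q (List.mem_cons_of_mem _ hq))
    rw [mono_cons, mul_assoc, h2, mul_smul_comm, ← mul_assoc, h1, smul_mul_assoc, smul_smul,
      mul_assoc, odds_cons]
    congr 1
    cases s <;> simp [add_mul, pow_add]
  -- done

theorem act_mono (ι : ℕ → B →⋆ₐ[ℂ] A) (π : A ≃⋆ₐ[ℂ] A) (g : ℕ → ℕ)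
    (hπ : ∀ j b, π (ι j b) = ι (g j) b) (L : List (Tag B)) :
    π (mono ι L) = mono ι (L.map fun p => (g p.1, p.2)) := by
  induction L with
  | nil => simp [mono_nil]
  | cons p L ih => rw [mono_cons, map_mul, hπ, ih, List.map_cons, mono_cons]

theorem odds_map_sites (g : ℕ → ℕ) (L : List (Tag B)) :
    odds (L.map fun p => (g p.1, p.2)) = odds L := by
  simp [odds, List.countP_map]
  rfl

end DF11

namespace DF11

/-- Block swap of `[0, N)` with `[M, M+N)`. -/
def bsFun (N M : ℕ) : ℕ → ℕ := fun x =>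
  if x < N then x + M else if M ≤ x ∧ x < M + N then x - M else x

theorem bs_invol {N M : ℕ} (h : N ≤ M) : Function.Involutive (bsFun N M) := by
  intro x
  unfold bsFun
  split_ifs <;> omega

def bs (N M : ℕ) (h : N ≤ M) : Equiv.Perm ℕ := Function.Involutive.toPerm _ (bs_invol h)

theorem bs_mem {N M : ℕ} (h : N ≤ M) : bs N M h ∈ finitaryPerms := by
  show Set.Finite {k | bs N M h k ≠ k}
  refine Set.Finite.subset (Set.finite_Iio (M + N)) ?_
  intro x hx
  simp only [Set.mem_setOf_eq] at hx
  by_contra hxx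
  have hge : M + N ≤ x := by simpa [Set.mem_Iio] using hxx
  apply hx
  show bsFun N M x = x
  unfold bsFun
  split_ifs <;> omega

theorem bs_small {N M : ℕ} (h : N ≤ M) {x : ℕ} (hx : x < N) : bs N M h x = x + M := by
  show bsFun N M x = x + M
  unfold bsFun
  rw [if_pos hx]

end DF11

namespace DF11

theorem le_foldr_max : ∀ (l : List ℕ), ∀ x ∈ l, x ≤ l.foldr max 0 := by
  intro l
  induction l with
  | nil => intro x hx; cases hx
  | cons a l ih =>
    intro x hx
    rcases List.mem_cons.mp hx with rfl | hx
    · exact le_max_left _ _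
    · exact le_trans (ih x hx) (le_max_right _ _)

theorem odd_vanish {B A : Type} [CStarAlgebra B] [CStarAlgebra A]
    (β : B ≃⋆ₐ[ℂ] B) (ι : ℕ → B →⋆ₐ[ℂ] A)
    (hcomm : ∀ i j, i ≠ j → ∀ b b', (β b = b ∨ β b' = b') → ι i b * ι j b' = ι j b' * ι i b)
    (hanti : ∀ i j, i ≠ j → ∀ b b', β b = -b → β b' = -b' → ι i b * ι j b' = -(ι j b' * ι i b))
    (act : finitaryPerms → A ≃⋆ₐ[ℂ] A)
    (hactι : ∀ g j b, act g (ι j b) = ι ((g : Equiv.Perm ℕ) j) b)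
    (Ω : A → ℂ) (hΩ : IsStateOn Ω) (hsym : ∀ g x, Ω (act g x) = Ω x)
    (L : List (Tag B)) (hok : ∀ p ∈ L, ok β p) (hodd : Odd (odds L)) :
    Ω (mono ι L) = 0 := by
  set a := mono ι L with ha
  set N : ℕ := (L.map (fun p => p.1)).foldr max 0 + 1 with hNdef
  have hN : ∀ p ∈ L, p.1 < N := by
    intro p hp
    have : p.1 ≤ (L.map (fun p => p.1)).foldr max 0 :=
      le_foldr_max _ _ (List.mem_map.mpr ⟨p, hp, rfl⟩)
    omega
  have hkM : ∀ k : ℕ, N ≤ (k + 1) * N := fun k => Nat.le_mul_of_pos_left N (Nat.succ_pos k)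
  let g : ℕ → finitaryPerms := fun k => ⟨bs N ((k + 1) * N) (hkM k), bs_mem (hkM k)⟩
  let Lk : ℕ → List (Tag B) := fun k => L.map fun p => (bs N ((k + 1) * N) (hkM k) p.1, p.2)
  let aa : ℕ → A := fun k => mono ι (Lk k)
  have hak : ∀ k, act (g k) a = aa k := fun k =>
    act_mono ι (act (g k)) _ (fun j b => hactι (g k) j b) L
  have hΩak : ∀ k, Ω (aa k) = Ω a := fun k => by rw [← hak, hsym]
  have hokLk : ∀ k, ∀ p ∈ Lk k, ok β p := by
    intro k p hp
    obtain ⟨q, hq, rfl⟩ := List.mem_map.mp hp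
    exact hok q hq
  have hoddsLk : ∀ k, odds (Lk k) = odds L := fun k => odds_map_sites _ L
  have hbound : ∀ k, ∀ p ∈ Lk k, (k + 1) * N ≤ p.1 ∧ p.1 < (k + 1) * N + N := by
    intro k p hp
    obtain ⟨q, hq, rfl⟩ := List.mem_map.mp hp
    have h1 : bs N ((k + 1) * N) (hkM k) q.1 = q.1 + (k + 1) * N := bs_small _ (hN q hq)
    show (k + 1) * N ≤ bs N ((k + 1) * N) (hkM k) q.1 ∧
      bs N ((k + 1) * N) (hkM k) q.1 < (k + 1) * N + N
    rw [h1]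
    have := hN q hq
    omega
  -- anticommutation of distinct copies
  have hT : ∀ j k, j ≠ k → star (aa j) * aa k + aa k * star (aa j) = 0 := by
    intro j k hjk
    obtain ⟨L', hL', hodds', hok', hsites'⟩ := star_mono β ι (Lk j) (hokLk j)
    have hdis : ∀ p ∈ L', ∀ q ∈ Lk k, p.1 ≠ q.1 := by
      intro p hp q hq
      obtain ⟨r, hr, hr1⟩ := hsites' p hp
      have hbr := hbound j r hr
      have hbq := hbound k q hq
      rcases Nat.lt_or_ge j k with hlt | hge
      · have hmul : (j + 2) * N ≤ (k + 1) * N := Nat.mul_le_mul_right N (by omega)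
        have : (j + 2) * N = (j + 1) * N + N := by ring
        omega
      · have hklt : k < j := by omega
        have hmul : (k + 2) * N ≤ (j + 1) * N := Nat.mul_le_mul_right N (by omega)
        have : (k + 2) * N = (k + 1) * N + N := by ring
        omega
    have hcm := comm_mono β ι hcomm hanti L' (Lk k) hok' (hokLk k) hdis
    have hexp : Odd (odds L' * odds (Lk k)) := by
      rw [hodds', hoddsLk j, hoddsLk k]
      exact hodd.mul hodd
    rw [hexp.neg_one_pow, neg_one_smul] at hcm
    have hstar : star (aa j) = mono ι L' := hL'
    rw [hstar, hcm]
    exact neg_add_cancel _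
  -- the averaged element
  have key2 : ∀ n : ℕ,
      Ω (star (∑ k ∈ Finset.range n, aa k) * ∑ k ∈ Finset.range n, aa k) +
        Ω ((∑ k ∈ Finset.range n, aa k) * star (∑ k ∈ Finset.range n, aa k)) =
      (n : ℂ) * (Ω (star a * a) + Ω (a * star a)) := by
    intro n
    have hsx : star (∑ k ∈ Finset.range n, aa k) = ∑ k ∈ Finset.range n, star (aa k) :=
      star_sum _ _
    have h1 : star (∑ k ∈ Finset.range n, aa k) * ∑ k ∈ Finset.range n, aa k =
        ∑ j ∈ Finset.range n, ∑ k ∈ Finset.range n, star (aa j) * aa k := by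
      rw [hsx, Finset.sum_mul_sum]
    have h2 : (∑ k ∈ Finset.range n, aa k) * star (∑ k ∈ Finset.range n, aa k) =
        ∑ j ∈ Finset.range n, ∑ k ∈ Finset.range n, aa k * star (aa j) := by
      rw [hsx, Finset.sum_mul_sum, Finset.sum_comm]
    have hsum : star (∑ k ∈ Finset.range n, aa k) * ∑ k ∈ Finset.range n, aa k +
        (∑ k ∈ Finset.range n, aa k) * star (∑ k ∈ Finset.range n, aa k) =
        ∑ j ∈ Finset.range n, (star (aa j) * aa j + aa j * star (aa j)) := by
      rw [h1, h2, ← Finset.sum_add_distrib]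
      refine Finset.sum_congr rfl fun j hj => ?_
      rw [← Finset.sum_add_distrib, Finset.sum_eq_single j]
      · intro k _ hkj
        exact hT j k fun h => hkj h.symm
      · intro hj'
        exact absurd hj hj'
    have hdiag : ∀ j : ℕ, star (aa j) * aa j + aa j * star (aa j) =
        act (g j) (star a * a + a * star a) := by
      intro j
      rw [map_add, map_mul, map_mul, map_star, hak]
    rw [← hΩ.1, hsum, o_sum hΩ]
    have : ∀ j ∈ Finset.range n, Ω (star (aa j) * aa j + aa j * star (aa j)) =
        Ω (star a * a) + Ω (a * star a) := by
      intro j _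
      rw [hdiag j, hsym, hΩ.1]
    rw [Finset.sum_congr rfl this, Finset.sum_const, Finset.card_range, nsmul_eq_mul]
  have hxn : ∀ n : ℕ, Ω (∑ k ∈ Finset.range n, aa k) = (n : ℂ) * Ω a := by
    intro n
    rw [o_sum hΩ, Finset.sum_congr rfl fun k _ => hΩak k, Finset.sum_const,
      Finset.card_range, nsmul_eq_mul]
  have hmain : ∀ n : ℕ, (n : ℝ) ^ 2 * Complex.normSq (Ω a) ≤
      (n : ℝ) * (Ω (star a * a) + Ω (a * star a)).re := by
    intro n
    have hcs := o_cs hΩ (∑ k ∈ Finset.range n, aa k)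
    rw [hxn n] at hcs
    have h2 : 0 ≤ (Ω ((∑ k ∈ Finset.range n, aa k) * star (∑ k ∈ Finset.range n, aa k))).re := by
      have h := hΩ.2.2.2 (star (∑ k ∈ Finset.range n, aa k))
      rw [star_star] at h
      exact (Complex.le_def.mp h).1
    have hre := congrArg Complex.re (key2 n)
    simp only [Complex.add_re, Complex.mul_re, Complex.natCast_re, Complex.natCast_im,
      zero_mul, sub_zero] at hre
    have hns : Complex.normSq ((n : ℂ) * Ω a) = (n : ℝ) ^ 2 * Complex.normSq (Ω a) := by
      rw [Complex.normSq_mul, Complex.normSq_natCast]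
      ring
    rw [hns] at hcs
    rw [Complex.add_re]
    linarith
  by_contra hw
  have hq : 0 < Complex.normSq (Ω a) := Complex.normSq_pos.mpr hw
  set q : ℝ := Complex.normSq (Ω a)
  set Cr : ℝ := (Ω (star a * a) + Ω (a * star a)).re
  obtain ⟨n, hn⟩ := exists_nat_gt (Cr / q)
  have hm := hmain (n + 1)
  have hpos : (0 : ℝ) < ((n : ℝ) + 1) := by positivity
  have hcast : ((n + 1 : ℕ) : ℝ) = (n : ℝ) + 1 := by push_cast; ring
  rw [hcast] at hm
  have h1 : ((n : ℝ) + 1) * q ≤ Cr := by nlinarith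
  have h2 : Cr < ((n : ℝ)) * q := (div_lt_iff₀ hq).mp hn
  nlinarith

end DF11

/-- Every symmetric (finite-permutation invariant) state on the infinite
minimal Fermi C*-tensor product `A = ⊛_ℕ B` of a unital Z₂-graded C*-algebra `(B, β)`
is even with respect to the induced grading `θ = ⊛_ℕ β`. -/
theorem deFinetti_stmt11
    (B : Type) [CStarAlgebra B] (β : B ≃⋆ₐ[ℂ] B) (hβ : ∀ b, β (β b) = b)
    (A : Type) [CStarAlgebra A]
    (θ : A ≃⋆ₐ[ℂ] A) (hθ : ∀ a, θ (θ a) = a)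
    -- the canonical embeddings of the tensor factors, with dense total range
    (ι : ℕ → B →⋆ₐ[ℂ] A)
    (hθι : ∀ j b, θ (ι j b) = ι j (β b))
    (hdense :
      Dense ((StarAlgebra.adjoin ℂ (⋃ j, Set.range (ι j)) : StarSubalgebra ℂ A) : Set A))
    -- Fermi (anti)commutation relations between distinct sites
    (hcomm : ∀ i j, i ≠ j → ∀ b b', (β b = b ∨ β b' = b') →
      ι i b * ι j b' = ι j b' * ι i b)
    (hanti : ∀ i j, i ≠ j → ∀ b b', β b = -b → β b' = -b' →
      ι i b * ι j b' = -(ι j b' * ι i b))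
    -- the natural action of the finitary permutation group
    (act : finitaryPerms → A ≃⋆ₐ[ℂ] A)
    (hactmul : ∀ g h x, act (g * h) x = act g (act h x))
    (hactι : ∀ g j b, act g (ι j b) = ι ((g : Equiv.Perm ℕ) j) b)
    -- a symmetric state
    (Ω : A → ℂ) (hΩ : IsStateOn Ω)
    (hsym : ∀ g x, Ω (act g x) = Ω x) :
    ∀ x, Ω (θ x) = Ω x := by

  classical
  open DF11 in
  -- the linear span of homogeneous monomials
  set Mset : Set A := {x | ∃ L : List (DF11.Tag B), (∀ p ∈ L, DF11.ok β p) ∧ DF11.mono ι L = x}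
    with hMset
  set V : Submodule ℂ A := Submodule.span ℂ Mset with hV
  have honeM : (1 : A) ∈ Mset := ⟨[], by simp, DF11.mono_nil ι⟩
  have hmulM : Mset * Mset ⊆ Mset := by
    rintro _ ⟨x, ⟨L, hL, rfl⟩, y, ⟨L', hL', rfl⟩, rfl⟩
    refine ⟨L ++ L', fun p hp => ?_, ?_⟩
    · rcases List.mem_append.mp hp with h | h
      · exact hL p h
      · exact hL' p h
    · show DF11.mono ι (L ++ L') = _
      rw [DF11.mono_append]
  have hVmul : ∀ x ∈ V, ∀ y ∈ V, x * y ∈ V := by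
    intro x hx y hy
    have h1 : V * V = Submodule.span ℂ (Mset * Mset) := Submodule.span_mul_span ℂ Mset Mset
    have h2 : V * V ≤ V := by
      rw [h1]
      exact Submodule.span_le.mpr (hmulM.trans Submodule.subset_span)
    exact h2 (Submodule.mul_mem_mul hx hy)
  have hVstar : ∀ x ∈ V, star x ∈ V := by
    intro x hx
    refine Submodule.span_induction (p := fun y _ => star y ∈ V) ?_ ?_ ?_ ?_ hx
    · rintro _ ⟨L, hL, rfl⟩
      obtain ⟨L', hL', _, hok', _⟩ := DF11.star_mono β ι L hL
      rw [hL']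
      exact Submodule.subset_span ⟨L', hok', rfl⟩
    · simpa using Submodule.zero_mem V
    · intro y z _ _ hy hz
      rw [star_add]; exact Submodule.add_mem V hy hz
    · intro c y _ hy
      rw [star_smul]; exact Submodule.smul_mem V _ hy
  let W : StarSubalgebra ℂ A :=
    { carrier := (V : Set A)
      mul_mem' := fun hx hy => hVmul _ hx _ hy
      one_mem' := Submodule.subset_span honeM
      add_mem' := fun hx hy => Submodule.add_mem V hx hy
      zero_mem' := Submodule.zero_mem V
      algebraMap_mem' := fun c => by
        have : algebraMap ℂ A c = c • (1 : A) := Algebra.algebraMap_eq_smul_one c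
        rw [this]
        exact Submodule.smul_mem V c (Submodule.subset_span honeM)
      star_mem' := fun hx => hVstar _ hx }
  have hadj : (StarAlgebra.adjoin ℂ (⋃ j, Set.range (ι j)) : StarSubalgebra ℂ A) ≤ W := by
    apply StarAlgebra.adjoin_le
    rintro x hx
    obtain ⟨_, ⟨j, rfl⟩, b, rfl⟩ := hx
    set e : B := (2⁻¹ : ℂ) • (b + β b) with he
    set o : B := (2⁻¹ : ℂ) • (b - β b) with ho
    have heo : e + o = b := by
      rw [he, ho, ← smul_add]
      have : b + β b + (b - β b) = (2 : ℂ) • b := by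
        rw [two_smul]; abel
      rw [this, smul_smul]
      norm_num
    have hee : β e = e := by
      rw [he, map_smul, map_add, hβ, add_comm]
    have hoo : β o = -o := by
      rw [ho, map_smul, map_sub, hβ, ← smul_neg, neg_sub]
    have h1 : ι j e ∈ Mset := by
      refine ⟨[(j, e, false)], ?_, ?_⟩
      · intro p hp
        have := List.mem_singleton.mp hp
        subst this
        exact hee
      · rw [DF11.mono_cons, DF11.mono_nil, mul_one]
    have h2 : ι j o ∈ Mset := by
      refine ⟨[(j, o, true)], ?_, ?_⟩
      · intro p hp
        have := List.mem_singleton.mp hp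
        subst this
        exact hoo
      · rw [DF11.mono_cons, DF11.mono_nil, mul_one]
    have : ι j b = ι j e + ι j o := by rw [← map_add, heo]
    show (ι j) b ∈ V
    rw [this]
    exact Submodule.add_mem V (Submodule.subset_span h1) (Submodule.subset_span h2)
  have hcore : ∀ x ∈ V, Ω (θ x) = Ω x := by
    intro x hx
    refine Submodule.span_induction (p := fun y _ => Ω (θ y) = Ω y) ?_ ?_ ?_ ?_ hx
    · rintro _ ⟨L, hL, rfl⟩
      rw [DF11.theta_mono β ι θ hθι L hL]
      rcases Nat.even_or_odd (DF11.odds L) with hev | hod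
      · rw [hev.neg_one_pow, one_smul]
      · rw [hod.neg_one_pow, neg_one_smul, DF11.o_neg hΩ,
          DF11.odd_vanish β ι hcomm hanti act hactι Ω hΩ hsym L hL hod, neg_zero]
    · show Ω (θ 0) = Ω 0
      rw [map_zero]
    · intro y z _ _ hy hz
      show Ω (θ (y + z)) = Ω (y + z)
      rw [map_add, hΩ.1, hΩ.1, hy, hz]
    · intro c y _ hy
      show Ω (θ (c • y)) = Ω (c • y)
      rw [map_smul, hΩ.2.1, hΩ.2.1, hy]
  have hco : Continuous fun x : A => Ω (θ x) :=
    (DF11.o_continuous hΩ).comp (StarAlgEquiv.isometry θ).continuous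
  have heq : (fun x : A => Ω (θ x)) = Ω :=
    Continuous.ext_on hdense hco (DF11.o_continuous hΩ) fun x hx => hcore x (hadj hx)
  exact fun x => congrFun heq x
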